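/- arXiv:0805.1593 — 7 statements merged into one kernel-verified Lean document; each statement's English description precedes it below -/
import Mathlib

section
/- With F(t) = Σ_m C(n,m) F_m t^m and G(t) = Σ_k C(n,k) G_{n−k} t^k as defined for an isotropic distribution, G(t) = (−1)^n F(−1−t). -/
lemma claimA (n a : ℕ) (ha : a ≤ n) (u : ℝ) :
    ∑ k ∈ Finset.range (n + 1), (n.choose k : ℝ) * (k.choose a : ℝ) * u ^ k
      = (n.choose a : ℝ) * (u ^ a * (1 + u) ^ (n - a)) := by
  have h1 : ∑ k ∈ Finset.range (n + 1), (n.choose k : ℝ) * (k.choose a : ℝ) * u ^ k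
      = ∑ k ∈ Finset.Ico a (n + 1), (n.choose k : ℝ) * (k.choose a : ℝ) * u ^ k := by
    refine (Finset.sum_subset ?_ ?_).symm
    · intro x hx; simp only [Finset.mem_Ico, Finset.mem_range] at *; omega
    · intro x hx hx'
      simp only [Finset.mem_Ico, Finset.mem_range] at *
      have : x.choose a = 0 := Nat.choose_eq_zero_of_lt (by omega)
      simp [this]
  rw [h1, Finset.sum_Ico_eq_sum_range]
  have h2 : n + 1 - a = n - a + 1 := by omega
  rw [h2, add_comm (1:ℝ) u, add_pow, Finset.mul_sum, Finset.mul_sum]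
  refine Finset.sum_congr rfl fun s hs => ?_
  simp only [Finset.mem_range] at hs
  have hid : n.choose (a + s) * (a + s).choose a = n.choose a * (n - a).choose s := by
    have := Nat.choose_mul (n := n) (k := a + s) (s := a) (by omega)
    simpa using this
  have : ((n.choose (a + s) * (a + s).choose a : ℕ) : ℝ)
      = ((n.choose a * (n - a).choose s : ℕ) : ℝ) := by rw [hid]
  push_cast at this
  rw [pow_add]
  simp only [one_pow]
  linear_combination u ^ a * u ^ s * this

/-- `G(t) = (−1)^n F(−1−t)`. -/
theorem stmt5 (n : ℕ) (p : ℕ → ℝ) (hp0 : ∀ k, 0 ≤ p k)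
    (hp1 : ∑ k ∈ Finset.range (n + 1), (n.choose k : ℝ) * p k = 1)
    (F : ℕ → ℝ) (hF : ∀ a, F a = ∑ k ∈ Finset.range (a + 1), (a.choose k : ℝ) * p k)
    (G : ℕ → ℝ)
    (hG : ∀ a, G a = ∑ k ∈ Finset.Icc a n, ((n - a).choose (k - a) : ℝ) * p k)
    (t : ℝ) :
    (∑ k ∈ Finset.range (n + 1), (n.choose k : ℝ) * G (n - k) * t ^ k)
      = (-1) ^ n * ∑ m ∈ Finset.range (n + 1), (n.choose m : ℝ) * F m * (-1 - t) ^ m := by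
  have hGL : ∀ k ≤ n, G (n - k) = ∑ j ∈ Finset.range (n + 1), (k.choose (n - j) : ℝ) * p j := by
    intro k hk
    rw [hG]
    have h1 : ∑ j ∈ Finset.Icc (n - k) n, ((n - (n - k)).choose (j - (n - k)) : ℝ) * p j
        = ∑ j ∈ Finset.Icc (n - k) n, (k.choose (n - j) : ℝ) * p j := by
      refine Finset.sum_congr rfl fun j hj => ?_
      simp only [Finset.mem_Icc] at hj
      have h3 : n - j = k - (j - (n - k)) := by omega
      rw [show n - (n - k) = k from by omega, h3, Nat.choose_symm (by omega)]
    rw [h1]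
    refine Finset.sum_subset ?_ ?_
    · intro x hx; simp only [Finset.mem_Icc, Finset.mem_range] at *; omega
    · intro x hx hx'
      simp only [Finset.mem_Icc, Finset.mem_range] at *
      have : k.choose (n - x) = 0 := Nat.choose_eq_zero_of_lt (by omega)
      simp [this]
  have hFL : ∀ m ≤ n, F m = ∑ i ∈ Finset.range (n + 1), (m.choose i : ℝ) * p i := by
    intro m hm
    rw [hF]
    refine Finset.sum_subset (Finset.range_subset_range.mpr (by omega)) ?_
    intro x hx hx'
    simp only [Finset.mem_range] at *
    have : m.choose x = 0 := Nat.choose_eq_zero_of_lt (by omega)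
    simp [this]
  have hL : (∑ k ∈ Finset.range (n + 1), (n.choose k : ℝ) * G (n - k) * t ^ k)
      = ∑ j ∈ Finset.range (n + 1), p j * ((n.choose j : ℝ) * (t ^ (n - j) * (1 + t) ^ j)) := by
    have : (∑ k ∈ Finset.range (n + 1), (n.choose k : ℝ) * G (n - k) * t ^ k)
        = ∑ k ∈ Finset.range (n + 1), ∑ j ∈ Finset.range (n + 1),
            (n.choose k : ℝ) * (k.choose (n - j) : ℝ) * t ^ k * p j := by
      refine Finset.sum_congr rfl fun k hk => ?_
      simp only [Finset.mem_range] at hk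
      rw [hGL k (by omega), Finset.mul_sum, Finset.sum_mul]
      exact Finset.sum_congr rfl fun j _ => by ring
    rw [this, Finset.sum_comm]
    refine Finset.sum_congr rfl fun j hj => ?_
    simp only [Finset.mem_range] at hj
    have : ∑ k ∈ Finset.range (n + 1),
        (n.choose k : ℝ) * (k.choose (n - j) : ℝ) * t ^ k * p j
        = (∑ k ∈ Finset.range (n + 1),
            (n.choose k : ℝ) * (k.choose (n - j) : ℝ) * t ^ k) * p j := by
      rw [Finset.sum_mul]
    rw [this, claimA n (n - j) (by omega) t, Nat.choose_symm (by omega),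
      show n - (n - j) = j from by omega]
    ring
  have hR : ((-1 : ℝ)) ^ n * ∑ m ∈ Finset.range (n + 1), (n.choose m : ℝ) * F m * (-1 - t) ^ m
      = ∑ j ∈ Finset.range (n + 1), p j * ((n.choose j : ℝ) * (t ^ (n - j) * (1 + t) ^ j)) := by
    have h1 : (∑ m ∈ Finset.range (n + 1), (n.choose m : ℝ) * F m * (-1 - t) ^ m)
        = ∑ m ∈ Finset.range (n + 1), ∑ i ∈ Finset.range (n + 1),
            (n.choose m : ℝ) * (m.choose i : ℝ) * (-1 - t) ^ m * p i := by
      refine Finset.sum_congr rfl fun m hm => ?_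
      simp only [Finset.mem_range] at hm
      rw [hFL m (by omega), Finset.mul_sum, Finset.sum_mul]
      exact Finset.sum_congr rfl fun i _ => by ring
    rw [h1, Finset.sum_comm, Finset.mul_sum]
    refine Finset.sum_congr rfl fun i hi => ?_
    simp only [Finset.mem_range] at hi
    have h2 : ∑ m ∈ Finset.range (n + 1),
        (n.choose m : ℝ) * (m.choose i : ℝ) * (-1 - t) ^ m * p i
        = (∑ m ∈ Finset.range (n + 1),
            (n.choose m : ℝ) * (m.choose i : ℝ) * (-1 - t) ^ m) * p i := by
      rw [Finset.sum_mul]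
    rw [h2, claimA n i (by omega) (-1 - t)]
    have e1 : (1 : ℝ) + (-1 - t) = -t := by ring
    have e2 : (-1 - t : ℝ) = -(1 + t) := by ring
    rw [e1, e2, neg_pow (1 + t) i, neg_pow t (n - i)]
    have e3 : (-1 : ℝ) ^ n * ((-1) ^ i) * ((-1) ^ (n - i)) = 1 := by
      rw [← pow_add, ← pow_add, show n + i + (n - i) = 2 * n from by omega, pow_mul]
      norm_num
    linear_combination ((n.choose i : ℝ) * (1 + t) ^ i * t ^ (n - i) * p i) * e3
  rw [hL, hR]
end

section
/- For an isotropic distribution on {0,1}^n, the second moment of the weight satisfies μ_2 = n[n − (2n−1) F_{n−1} + (n−1) F_{n−2}] = n[(n−1) G_2 + G_1]. -/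
/-- `μ₂ = n[n − (2n−1)F_{n−1} + (n−1)F_{n−2}] = n[(n−1)G₂ + G₁]`. -/
theorem stmt10 (n : ℕ) (hn : 2 ≤ n) (p : ℕ → ℝ) (hp0 : ∀ k, 0 ≤ p k)
    (hp1 : ∑ k ∈ Finset.range (n + 1), (n.choose k : ℝ) * p k = 1)
    (F : ℕ → ℝ) (hF : ∀ a, F a = ∑ k ∈ Finset.range (a + 1), (a.choose k : ℝ) * p k)
    (G : ℕ → ℝ)
    (hG : ∀ a, G a = ∑ k ∈ Finset.Icc a n, ((n - a).choose (k - a) : ℝ) * p k)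
    (μ : ℕ → ℝ)
    (hμ : ∀ m, μ m = ∑ k ∈ Finset.range (n + 1), (k : ℝ) ^ m * (n.choose k : ℝ) * p k) :
    μ 2 = n * (n - (2 * n - 1) * F (n - 1) + (n - 1) * F (n - 2)) ∧
      μ 2 = n * ((n - 1) * G 2 + G 1) := by
  obtain ⟨m, rfl⟩ : ∃ m, n = m + 2 := ⟨n - 2, by omega⟩
  have hsub1 : m + 2 - 1 = m + 1 := by omega
  have hsub2 : m + 2 - 2 = m := by omega
  constructor
  · -- first identity
    rw [hμ, hsub1, hsub2, hF, hF]
    -- extend F sums to range (m+3)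
    have hF1 : ∑ k ∈ Finset.range (m + 1 + 1), ((m+1).choose k : ℝ) * p k
        = ∑ k ∈ Finset.range (m + 2 + 1), ((m+1).choose k : ℝ) * p k := by
      rw [Finset.sum_range_succ (n := m + 2)]
      simp [Nat.choose_eq_zero_of_lt]
    have hF2 : ∑ k ∈ Finset.range (m + 1), (m.choose k : ℝ) * p k
        = ∑ k ∈ Finset.range (m + 2 + 1), (m.choose k : ℝ) * p k := by
      rw [Finset.sum_range_succ (n := m + 2), Finset.sum_range_succ (n := m + 1)]
      simp [Nat.choose_eq_zero_of_lt]
    rw [hF1, hF2]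
    have key : ∀ k ∈ Finset.range (m + 2 + 1),
        (k : ℝ) ^ 2 * ((m+2).choose k : ℝ) * p k
        = (((m:ℝ)+2) * ((m:ℝ)+2)) * (((m+2).choose k : ℝ) * p k)
            - (((m:ℝ)+2) * (2*((m:ℝ)+2)-1)) * (((m+1).choose k : ℝ) * p k)
            + (((m:ℝ)+2) * (((m:ℝ)+2)-1)) * ((m.choose k : ℝ) * p k) := by
      intro k hk
      rw [Finset.mem_range] at hk
      by_cases hk1 : k ≤ m + 1
      · have h1 : ((m+1).choose k : ℝ) * ((m:ℝ)+2)
            = ((m+2).choose k : ℝ) * (((m:ℝ)+2) - k) := by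
          have h := Nat.choose_mul_succ_eq (m+1) k
          have hc : ((m + 1 + 1 - k : ℕ) : ℝ) = ((m:ℝ)+2) - k := by
            have : k ≤ m + 2 := by omega
            push_cast [Nat.cast_sub this]
            ring
          have := congrArg (fun x : ℕ => (x : ℝ)) h
          push_cast at this
          rw [show ((m:ℝ)+1+1) = (m:ℝ)+2 by ring] at this
          rw [this]
          rw [hc]
        have h2 : (m.choose k : ℝ) * ((m:ℝ)+1)
            = ((m+1).choose k : ℝ) * (((m:ℝ)+1) - k) := by
          have h := Nat.choose_mul_succ_eq m k
          have hc : ((m + 1 - k : ℕ) : ℝ) = ((m:ℝ)+1) - k := by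
            push_cast [Nat.cast_sub hk1]
            ring
          have := congrArg (fun x : ℕ => (x : ℝ)) h
          push_cast at this
          rw [this, hc]
        linear_combination (((m:ℝ)+2+(k:ℝ)) * p k) * h1 - (((m:ℝ)+2) * p k) * h2
      · have hk2 : k = m + 2 := by omega
        subst hk2
        rw [Nat.choose_self, Nat.choose_eq_zero_of_lt (by omega : m + 1 < m + 2),
          Nat.choose_eq_zero_of_lt (by omega : m < m + 2)]
        push_cast
        ring
    rw [Finset.sum_congr rfl key, Finset.sum_add_distrib, Finset.sum_sub_distrib,
      ← Finset.mul_sum, ← Finset.mul_sum, ← Finset.mul_sum, hp1]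
    push_cast
    ring
  · -- second identity
    rw [hμ, hG, hG, hsub1]
    have hIcc1 : Finset.Icc 1 (m + 2) = Finset.Ico 1 (m + 3) := by
      exact (Finset.Ico_add_one_right_eq_Icc 1 (m + 2)).symm
    have hIcc2 : Finset.Icc 2 (m + 2) = Finset.Ico 2 (m + 3) := by
      exact (Finset.Ico_add_one_right_eq_Icc 2 (m + 2)).symm
    rw [hIcc1, hIcc2, Finset.sum_Ico_eq_sum_range, Finset.sum_Ico_eq_sum_range]
    have e1 : m + 3 - 1 = m + 2 := by omega
    have e2 : m + 3 - 2 = m + 1 := by omega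
    rw [e1, e2]
    simp only [show m + 2 - 1 = m + 1 from by omega, show m + 2 - 2 = m from by omega]
    -- now G-sums are over ranges; LHS : peel k = 0
    rw [Finset.sum_range_succ' (n := m + 2)]
    simp only [Nat.cast_zero]
    rw [show ((0:ℝ))^2 * ((m+2).choose 0 : ℝ) * p 0 = 0 by ring, add_zero]
    -- split (j+1)^2 = (j+1)*j + (j+1)
    have split : ∀ j ∈ Finset.range (m + 2),
        ((j+1 : ℕ) : ℝ)^2 * ((m+2).choose (j+1) : ℝ) * p (j+1)
        = ((j+1 : ℕ) : ℝ) * (j:ℝ) * ((m+2).choose (j+1) : ℝ) * p (j+1)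
          + ((j+1 : ℕ) : ℝ) * ((m+2).choose (j+1) : ℝ) * p (j+1) := by
      intro j _
      push_cast
      ring
    rw [Finset.sum_congr rfl split, Finset.sum_add_distrib]
    -- second piece equals (m+2) * G1-sum
    have hB : ∑ j ∈ Finset.range (m + 2), ((j+1 : ℕ) : ℝ) * ((m+2).choose (j+1) : ℝ) * p (j+1)
        = ((m:ℝ)+2) * ∑ j ∈ Finset.range (m + 2),
            (((m+1).choose (1 + j - 1) : ℝ) * p (1 + j)) := by
      rw [Finset.mul_sum]
      refine Finset.sum_congr rfl fun j _ => ?_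
      have h := Nat.add_one_mul_choose_eq (m+1) j
      have := congrArg (fun x : ℕ => (x : ℝ)) h
      push_cast at this
      rw [show 1 + j - 1 = j from by omega, show 1 + j = j + 1 from by omega]
      push_cast
      linear_combination (-p (j + 1)) * this
    -- first piece : peel j = 0 then reindex
    have hA : ∑ j ∈ Finset.range (m + 2), ((j+1 : ℕ) : ℝ) * (j:ℝ) * ((m+2).choose (j+1) : ℝ) * p (j+1)
        = ((m:ℝ)+2) * ((m:ℝ)+1) * ∑ i ∈ Finset.range (m + 1),
            ((m.choose (2 + i - 2) : ℝ) * p (2 + i)) := by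
      rw [Finset.sum_range_succ' (n := m + 1)]
      simp only [Nat.cast_zero, Nat.cast_one]
      rw [show ((0:ℕ)+1 : ℕ) = 1 from rfl]
      rw [show ((1:ℕ):ℝ) * (0:ℝ) * ((m+2).choose 1 : ℝ) * p 1 = 0 by ring, add_zero]
      rw [Finset.mul_sum]
      refine Finset.sum_congr rfl fun i _ => ?_
      have h1 := Nat.add_one_mul_choose_eq (m+1) (i+1)
      have h2 := Nat.add_one_mul_choose_eq m i
      have c1 := congrArg (fun x : ℕ => (x : ℝ)) h1
      have c2 := congrArg (fun x : ℕ => (x : ℝ)) h2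
      push_cast at c1 c2
      rw [show 2 + i - 2 = i from by omega, show 2 + i = i + 2 from by omega,
        show i + 1 + 1 = i + 2 from by omega]
      push_cast
      linear_combination (-((i:ℝ)+1) * p (i+2)) * c1 + (-((m:ℝ)+2) * p (i+2)) * c2
    rw [hA, hB]
    push_cast
    ring
end

section
/- For an isotropic distribution on {0,1}^n (n ≥ 2), the variance of the weight equals n[F_{n−1} − n F_{n−1}² + (n−1) F_{n−2}], and consequently F_{n−2} ≥ (n−1)^{−1}(n F_{n−1} − 1) F_{n−1}. -/
open Finset

private lemma pascalG (p : ℕ → ℝ) (a t : ℕ) :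
    ∑ k ∈ Finset.range (a + 2), ((a + 1).choose k : ℝ) * p (k + t)
      = ∑ k ∈ Finset.range (a + 1), (a.choose k : ℝ) * p (k + t)
        + ∑ k ∈ Finset.range (a + 1), (a.choose k : ℝ) * p (k + 1 + t) := by
  rw [Finset.sum_range_succ' (fun k => ((a + 1).choose k : ℝ) * p (k + t)) (a + 1),
      Finset.sum_range_succ' (fun k => ((a).choose k : ℝ) * p (k + t)) a]
  have e3 : ∑ x ∈ Finset.range (a + 1), ((a + 1).choose (x + 1) : ℝ) * p (x + 1 + t)
      = ∑ x ∈ Finset.range (a + 1), ((a.choose x : ℝ) * p (x + 1 + t))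
        + ∑ x ∈ Finset.range (a + 1), ((a.choose (x + 1) : ℝ) * p (x + 1 + t)) := by
    rw [← Finset.sum_add_distrib]
    exact Finset.sum_congr rfl fun x _ => by
      rw [Nat.choose_succ_succ]; push_cast; ring
  have e4 : ∑ x ∈ Finset.range (a + 1), ((a.choose (x + 1) : ℝ) * p (x + 1 + t))
      = ∑ x ∈ Finset.range a, ((a.choose (x + 1) : ℝ) * p (x + 1 + t)) := by
    rw [Finset.sum_range_succ]; simp
  simp only [e3, e4, Nat.choose_zero_right, Nat.cast_one]
  ring

private lemma sumK (p : ℕ → ℝ) (a : ℕ) :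
    ∑ k ∈ Finset.range (a + 2), (k : ℝ) * ((a + 1).choose k : ℝ) * p k
      = (a + 1) * ∑ k ∈ Finset.range (a + 1), (a.choose k : ℝ) * p (k + 1) := by
  rw [Finset.sum_range_succ' (fun k => (k : ℝ) * ((a + 1).choose k : ℝ) * p k) (a + 1),
      Finset.mul_sum]
  simp only [Nat.cast_zero, zero_mul, add_zero]
  refine Finset.sum_congr rfl fun k _ => ?_
  have h := Nat.add_one_mul_choose_eq a k
  have h' : ((a : ℝ) + 1) * (a.choose k : ℝ) = ((a + 1).choose (k + 1) : ℝ) * ((k : ℝ) + 1) := by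
    exact_mod_cast congrArg (Nat.cast : ℕ → ℝ) h
  push_cast
  linear_combination (-(p (k + 1))) * h'

private lemma sumKK (p : ℕ → ℝ) (a : ℕ) :
    ∑ k ∈ Finset.range (a + 3), (k : ℝ) * ((k : ℝ) - 1) * ((a + 2).choose k : ℝ) * p k
      = (a + 2) * (a + 1) * ∑ k ∈ Finset.range (a + 1), (a.choose k : ℝ) * p (k + 2) := by
  rw [Finset.sum_range_succ'
        (fun k => (k : ℝ) * ((k : ℝ) - 1) * ((a + 2).choose k : ℝ) * p k) (a + 2),
      Finset.sum_range_succ'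
        (fun k => ((k + 1 : ℕ) : ℝ) * (((k + 1 : ℕ) : ℝ) - 1) * ((a + 2).choose (k + 1) : ℝ)
          * p (k + 1)) (a + 1),
      Finset.mul_sum]
  push_cast
  norm_num
  refine Finset.sum_congr rfl fun k _ => ?_
  have h1 := Nat.add_one_mul_choose_eq (a + 1) (k + 1)
  have h2 := Nat.add_one_mul_choose_eq a k
  have h1' : ((a : ℝ) + 2) * ((a + 1).choose (k + 1) : ℝ)
      = ((a + 2).choose (k + 2) : ℝ) * ((k : ℝ) + 2) := by
    exact_mod_cast congrArg (Nat.cast : ℕ → ℝ) h1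
  have h2' : ((a : ℝ) + 1) * (a.choose k : ℝ)
      = ((a + 1).choose (k + 1) : ℝ) * ((k : ℝ) + 1) := by
    exact_mod_cast congrArg (Nat.cast : ℕ → ℝ) h2
  linear_combination (-(p (k + 2))) * (((k : ℝ) + 1) * h1' + ((a : ℝ) + 2) * h2')

/-- the variance of the weight equals
`n[F_{n−1} − n F_{n−1}² + (n−1) F_{n−2}]`, and consequently
`F_{n−2} ≥ (n−1)⁻¹ (n F_{n−1} − 1) F_{n−1}`. -/
theorem stmt11 (n : ℕ) (hn : 2 ≤ n) (p : ℕ → ℝ) (hp0 : ∀ k, 0 ≤ p k)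
    (hp1 : ∑ k ∈ Finset.range (n + 1), (n.choose k : ℝ) * p k = 1)
    (F : ℕ → ℝ) (hF : ∀ a, F a = ∑ k ∈ Finset.range (a + 1), (a.choose k : ℝ) * p k)
    (μ : ℕ → ℝ)
    (hμ : ∀ m, μ m = ∑ k ∈ Finset.range (n + 1), (k : ℝ) ^ m * (n.choose k : ℝ) * p k) :
    μ 2 - μ 1 ^ 2 = n * (F (n - 1) - n * F (n - 1) ^ 2 + (n - 1) * F (n - 2)) ∧
      F (n - 2) ≥ ((n : ℝ) - 1)⁻¹ * (n * F (n - 1) - 1) * F (n - 1) := by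
  obtain ⟨m, rfl⟩ : ∃ m, n = m + 2 := ⟨n - 2, by omega⟩
  have h10 : m + 2 - 1 = m + 1 := rfl
  have h20 : m + 2 - 2 = m := rfl
  rw [h10, h20]
  -- shifted partial sums
  set S1 : ℝ := ∑ k ∈ Finset.range (m + 2), ((m + 1).choose k : ℝ) * p (k + 1) with hS1def
  set S1' : ℝ := ∑ k ∈ Finset.range (m + 1), (m.choose k : ℝ) * p (k + 1) with hS1'def
  set S2 : ℝ := ∑ k ∈ Finset.range (m + 1), (m.choose k : ℝ) * p (k + 2) with hS2def
  have hA : (1 : ℝ) = F (m + 1) + S1 := by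
    have := pascalG p (m + 1) 0
    simp only [add_zero] at this
    rw [← hp1, hF (m + 1), hS1def]
    convert this using 2 <;> norm_num
  have hB : F (m + 1) = F m + S1' := by
    have := pascalG p m 0
    simp only [add_zero] at this
    rw [hF (m + 1), hF m]
    exact this
  have hC : S1 = S1' + S2 := by
    have := pascalG p m 1
    simp only [show ∀ k : ℕ, k + 1 + 1 = k + 2 from fun k => rfl] at this
    exact this
  have hμ1 : μ 1 = (m + 2) * S1 := by
    rw [hμ 1]
    have := sumK p (m + 1)
    simp only [pow_one]
    rw [show m + 2 + 1 = (m + 1) + 2 from rfl]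
    rw [show ((m:ℕ) + 2) = ((m + 1) + 1) from rfl] at *
    convert this using 2 <;> push_cast <;> ring
  have hμ2 : μ 2 = (m + 2) * S1 + (m + 2) * (m + 1) * S2 := by
    rw [hμ 2]
    have hkk := sumKK p m
    have hk := sumK p (m + 1)
    have hsplit : ∑ k ∈ Finset.range (m + 2 + 1), (k : ℝ) ^ 2 * ((m + 2).choose k : ℝ) * p k
        = (∑ k ∈ Finset.range (m + 3), (k : ℝ) * ((m + 1 + 1).choose k : ℝ) * p k)
          + ∑ k ∈ Finset.range (m + 3), (k : ℝ) * ((k : ℝ) - 1) * ((m + 2).choose k : ℝ) * p k := by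
      rw [← Finset.sum_add_distrib]
      exact Finset.sum_congr rfl fun k _ => by push_cast; ring
    rw [hsplit, hk, hkk]
    push_cast
    ring
  -- the variance formula
  have hpart1 : μ 2 - μ 1 ^ 2
      = (↑(m + 2) : ℝ) * (F (m + 1) - (↑(m + 2) : ℝ) * F (m + 1) ^ 2 + ((↑(m + 2) : ℝ) - 1) * F m) := by
    have hS1v : S1 = 1 - F (m + 1) := by linarith
    have hS2v : S2 = 1 - 2 * F (m + 1) + F m := by linarith
    rw [hμ2, hμ1, hS1v, hS2v]
    push_cast
    ring
  -- variance is nonnegative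
  have hvar : 0 ≤ μ 2 - μ 1 ^ 2 := by
    have hnn : 0 ≤ ∑ k ∈ Finset.range (m + 2 + 1),
        ((k : ℝ) - μ 1) ^ 2 * (((m + 2).choose k : ℝ) * p k) :=
      Finset.sum_nonneg fun k _ =>
        mul_nonneg (sq_nonneg _) (mul_nonneg (Nat.cast_nonneg _) (hp0 k))
    have hexp : ∑ k ∈ Finset.range (m + 2 + 1),
        ((k : ℝ) - μ 1) ^ 2 * (((m + 2).choose k : ℝ) * p k)
        = (∑ k ∈ Finset.range (m + 2 + 1), (k : ℝ) ^ 2 * ((m + 2).choose k : ℝ) * p k)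
          - 2 * μ 1 * (∑ k ∈ Finset.range (m + 2 + 1), (k : ℝ) ^ 1 * ((m + 2).choose k : ℝ) * p k)
          + μ 1 ^ 2 * (∑ k ∈ Finset.range (m + 2 + 1), ((m + 2).choose k : ℝ) * p k) := by
      rw [Finset.mul_sum, Finset.mul_sum, ← Finset.sum_sub_distrib, ← Finset.sum_add_distrib]
      exact Finset.sum_congr rfl fun k _ => by ring
    rw [hexp, hp1, ← hμ 2, ← hμ 1] at hnn
    nlinarith [hnn]
  refine ⟨hpart1, ?_⟩
  rw [hpart1] at hvar
  have hpos : (0 : ℝ) < (m : ℝ) + 2 := by positivity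
  have hkey : 0 ≤ F (m + 1) - (↑(m + 2) : ℝ) * F (m + 1) ^ 2 + ((↑(m + 2) : ℝ) - 1) * F m := by
    push_cast at hvar ⊢
    nlinarith [hvar]
  have hc : ((↑(m + 2) : ℝ)) - 1 = (m : ℝ) + 1 := by push_cast; ring
  rw [ge_iff_le, hc, inv_mul_eq_div, div_mul_eq_mul_div,
      div_le_iff₀ (by positivity : (0 : ℝ) < (m : ℝ) + 1)]
  push_cast at hkey ⊢
  nlinarith [hkey]
end

section
/- Under the hypotheses of the main theorem (i.i.d. isotropic code generation with coefficients F_a, source generating function Π), the expected weight of the target pattern is n[1 − Π(F_{n−1})] and its variance is n[Π(F_{n−1}) − n Π(F_{n−1})² + (n−1) Π(F_{n−2})]. -/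
attribute [local instance] Classical.propDecidable

def Isotropic {n : ℕ} (μ : (Fin n → Bool) → ℝ) : Prop :=
  ∀ (σ : Equiv.Perm (Fin n)) (α : Fin n → Bool), μ (α ∘ σ) = μ α

def wt {N : ℕ} (β : Fin N → Bool) : ℕ :=
  (Finset.univ.filter (fun i => β i = true)).card

noncomputable def superpose {N n : ℕ} (β : Fin N → Bool)
    (ω : Fin N → (Fin n → Bool)) : Fin n → Bool :=
  (Finset.univ.filter (fun j => β j = true)).sup ω

lemma superpose_false_iff {N n : ℕ} (β : Fin N → Bool) (ω : Fin N → (Fin n → Bool)) (i : Fin n) :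
    superpose β ω i = false ↔ ∀ j, β j = true → ω j i = false := by
  unfold superpose
  rw [Finset.sup_apply]
  rw [show (false = (⊥ : Bool)) from rfl, Finset.sup_eq_bot_iff]
  simp

lemma le_alpha_iff {n : ℕ} (S : Finset (Fin n)) (c : Fin n → Bool) :
    c ≤ (fun i => if i ∈ S then false else true) ↔ ∀ i ∈ S, c i = false := by
  rw [Pi.le_def]
  constructor
  · intro h i hi
    have := h i
    simp [hi] at this
    exact le_bot_iff.mp this
  · intro h i
    by_cases hi : i ∈ S
    · simp [hi, h i hi]
    · simp [hi]

lemma wt_alpha {n : ℕ} (S : Finset (Fin n)) :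
    wt (fun i => if i ∈ S then false else true) = n - S.card := by
  unfold wt
  have : (Finset.univ.filter (fun i => (if i ∈ S then false else true) = true)) = Sᶜ := by
    ext i
    by_cases hi : i ∈ S <;> simp [hi]
  rw [this, Finset.card_compl, Fintype.card_fin]

lemma factor {N n : ℕ} (μ : (Fin n → Bool) → ℝ) (hμ1 : ∑ c, μ c = 1)
    (β : Fin N → Bool) (S : Finset (Fin n)) :
    ∑ ω : Fin N → (Fin n → Bool), (∏ j, μ (ω j)) *
      (if ∀ i ∈ S, superpose β ω i = false then 1 else 0)
    = (∑ c : Fin n → Bool, if ∀ i ∈ S, c i = false then μ c else 0) ^ wt β := by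
  classical
  set f : Fin N → (Fin n → Bool) → ℝ :=
    fun j c => if β j = true then (if ∀ i ∈ S, c i = false then μ c else 0) else μ c with hf
  have key : ∀ ω : Fin N → (Fin n → Bool),
      (∏ j, μ (ω j)) * (if ∀ i ∈ S, superpose β ω i = false then 1 else 0)
      = ∏ j, f j (ω j) := by
    intro ω
    by_cases h : ∀ i ∈ S, superpose β ω i = false
    · rw [if_pos h, mul_one]
      apply Finset.prod_congr rfl
      intro j _
      by_cases hj : β j = true
      · have : ∀ i ∈ S, ω j i = false := by
          intro i hi
          exact (superpose_false_iff β ω i).mp (h i hi) j hj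
        simp only [hf, hj, if_true]
        exact (if_pos this).symm
      · simp [hf, hj]
    · rw [if_neg h, mul_zero]
      push_neg at h
      obtain ⟨i, hi, hine⟩ := h
      have : ∃ j, β j = true ∧ ω j i ≠ false := by
        by_contra hc
        push_neg at hc
        exact hine ((superpose_false_iff β ω i).mpr (fun j hj => hc j hj))
      obtain ⟨j, hj, hωj⟩ := this
      symm
      apply Finset.prod_eq_zero (Finset.mem_univ j)
      have : ¬ ∀ i' ∈ S, ω j i' = false := fun hc => hωj (hc i hi)
      simp [hf, hj, this]
  rw [Finset.sum_congr rfl (fun ω _ => key ω)]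
  rw [← Fintype.piFinset_univ, ← Finset.prod_univ_sum]
  have : ∀ j, (∑ c : Fin n → Bool, f j c)
      = if β j = true then (∑ c : Fin n → Bool, if ∀ i ∈ S, c i = false then μ c else 0) else 1 := by
    intro j
    by_cases hj : β j = true <;> simp [hf, hj, hμ1]
  rw [Finset.prod_congr rfl (fun j _ => this j)]
  rw [Finset.prod_ite, Finset.prod_const, Finset.prod_const_one, mul_one]
  rfl

lemma wt_cast {n : ℕ} (s : Fin n → Bool) :
    ((wt s : ℝ)) = ∑ i, (1 - (if s i = false then (1:ℝ) else 0)) := by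
  rw [wt, Finset.card_filter]
  push_cast
  apply Finset.sum_congr rfl
  intro i _
  cases h : s i <;> simp [h]

/-- with i.i.d. isotropic code generation (coefficients `F_a`)
and source generating function `PGF`, the expected weight of the target
pattern is `n[1 − PGF(F_{n−1})]` and its variance is
`n[PGF(F_{n−1}) − n PGF(F_{n−1})² + (n−1) PGF(F_{n−2})]`. -/
theorem stmt15 {N n : ℕ} (hn : 2 ≤ n) (μ : (Fin n → Bool) → ℝ)
    (hμ0 : ∀ c, 0 ≤ μ c) (hμ1 : ∑ c, μ c = 1) (hiso : Isotropic μ)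
    (P : (Fin N → Bool) → ℝ) (hP0 : ∀ β, 0 ≤ P β) (hP1 : ∑ β, P β = 1)
    (F : ℕ → ℝ)
    (hF : ∀ α : Fin n → Bool, F (wt α) = ∑ c : Fin n → Bool, if c ≤ α then μ c else 0)
    (PGF : ℝ → ℝ) (hPGF : ∀ t, PGF t = ∑ β : Fin N → Bool, P β * t ^ wt β)
    (E V : ℝ)
    (hE : E = ∑ β : Fin N → Bool, ∑ ω : Fin N → (Fin n → Bool),
        P β * (∏ j, μ (ω j)) * (wt (superpose β ω) : ℝ))
    (hV : V = (∑ β : Fin N → Bool, ∑ ω : Fin N → (Fin n → Bool),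
        P β * (∏ j, μ (ω j)) * (wt (superpose β ω) : ℝ) ^ 2) - E ^ 2) :
    E = n * (1 - PGF (F (n - 1))) ∧
      V = n * (PGF (F (n - 1)) - n * PGF (F (n - 1)) ^ 2 + (n - 1) * PGF (F (n - 2))) := by
  classical
  -- evaluation of F at coordinate sets
  have hFval : ∀ S : Finset (Fin n),
      (∑ c : Fin n → Bool, if ∀ i ∈ S, c i = false then μ c else 0) = F (n - S.card) := by
    intro S
    rw [← wt_alpha S, hF]
    exact Finset.sum_congr rfl fun c _ => if_congr (le_alpha_iff S c).symm rfl rfl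
  set T1 : ℝ := F (n - 1) with hT1
  set T2 : ℝ := F (n - 2) with hT2
  -- total mass
  have h0 : ∀ β : Fin N → Bool, ∑ ω : Fin N → (Fin n → Bool), (∏ j, μ (ω j)) = 1 := by
    intro β
    have h := factor μ hμ1 β ∅
    simpa [hμ1] using h
  -- single coordinate
  have h1 : ∀ (β : Fin N → Bool) (i : Fin n),
      ∑ ω : Fin N → (Fin n → Bool), (∏ j, μ (ω j)) *
        (if superpose β ω i = false then (1:ℝ) else 0) = T1 ^ wt β := by
    intro β i
    have h := factor μ hμ1 β {i}
    rw [hFval] at h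
    simp only [Finset.card_singleton] at h
    rw [← h]
    apply Finset.sum_congr rfl
    intro ω _
    congr 1
    apply if_congr _ rfl rfl
    simp
  -- pair of coordinates
  have h2 : ∀ (β : Fin N → Bool) (i k : Fin n), i ≠ k →
      ∑ ω : Fin N → (Fin n → Bool), (∏ j, μ (ω j)) *
        ((if superpose β ω i = false then (1:ℝ) else 0) *
         (if superpose β ω k = false then (1:ℝ) else 0)) = T2 ^ wt β := by
    intro β i k hik
    have h := factor μ hμ1 β {i, k}
    rw [hFval] at h
    rw [Finset.card_pair hik] at h
    rw [← h]
    apply Finset.sum_congr rfl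
    intro ω _
    congr 1
    by_cases hA : superpose β ω i = false <;> by_cases hB : superpose β ω k = false <;>
      simp [hA, hB]
  -- expected value per source pattern
  have hE1 : ∀ β : Fin N → Bool,
      ∑ ω : Fin N → (Fin n → Bool), (∏ j, μ (ω j)) * (wt (superpose β ω) : ℝ)
      = n * (1 - T1 ^ wt β) := by
    intro β
    have step : ∀ ω : Fin N → (Fin n → Bool),
        (∏ j, μ (ω j)) * (wt (superpose β ω) : ℝ)
        = ∑ i, ((∏ j, μ (ω j)) - (∏ j, μ (ω j)) *
            (if superpose β ω i = false then (1:ℝ) else 0)) := by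
      intro ω
      rw [wt_cast, Finset.mul_sum]
      exact Finset.sum_congr rfl fun i _ => by ring
    rw [Finset.sum_congr rfl fun ω _ => step ω, Finset.sum_comm]
    rw [Finset.sum_congr rfl fun i _ => by
      rw [Finset.sum_sub_distrib, h0 β, h1 β i]]
    simp [Finset.sum_const, Finset.card_univ]
    ring
  -- second moment per source pattern
  have hE2 : ∀ β : Fin N → Bool,
      ∑ ω : Fin N → (Fin n → Bool), (∏ j, μ (ω j)) * (wt (superpose β ω) : ℝ) ^ 2
      = (n : ℝ) * ((n : ℝ) * (1 - T1 ^ wt β - T1 ^ wt β + T2 ^ wt β)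
          + (T1 ^ wt β - T2 ^ wt β)) := by
    intro β
    set G : ℝ := T1 ^ wt β with hG
    set H : ℝ := T2 ^ wt β with hH
    have step : ∀ ω : Fin N → (Fin n → Bool),
        (∏ j, μ (ω j)) * (wt (superpose β ω) : ℝ) ^ 2
        = ∑ i, ∑ k, ((∏ j, μ (ω j))
            - (∏ j, μ (ω j)) * (if superpose β ω i = false then (1:ℝ) else 0)
            - (∏ j, μ (ω j)) * (if superpose β ω k = false then (1:ℝ) else 0)
            + (∏ j, μ (ω j)) * ((if superpose β ω i = false then (1:ℝ) else 0)
              * (if superpose β ω k = false then (1:ℝ) else 0))) := by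
      intro ω
      rw [wt_cast, sq, Finset.sum_mul_sum, Finset.mul_sum]
      refine Finset.sum_congr rfl fun i _ => ?_
      rw [Finset.mul_sum]
      exact Finset.sum_congr rfl fun k _ => by ring
    rw [Finset.sum_congr rfl fun ω _ => step ω, Finset.sum_comm]
    have inner : ∀ i : Fin n,
        ∑ ω : Fin N → (Fin n → Bool), ∑ k, ((∏ j, μ (ω j))
            - (∏ j, μ (ω j)) * (if superpose β ω i = false then (1:ℝ) else 0)
            - (∏ j, μ (ω j)) * (if superpose β ω k = false then (1:ℝ) else 0)
            + (∏ j, μ (ω j)) * ((if superpose β ω i = false then (1:ℝ) else 0)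
              * (if superpose β ω k = false then (1:ℝ) else 0)))
        = ∑ k, (1 - G - G + (if i = k then G else H)) := by
      intro i
      rw [Finset.sum_comm]
      refine Finset.sum_congr rfl fun k _ => ?_
      rw [Finset.sum_add_distrib, Finset.sum_sub_distrib, Finset.sum_sub_distrib,
        h0 β, h1 β i, h1 β k]
      congr 1
      by_cases hik : i = k
      · subst hik
        rw [if_pos rfl]
        rw [hG, ← h1 β i]
        apply Finset.sum_congr rfl
        intro ω _
        congr 1
        by_cases hA : superpose β ω i = false <;> simp [hA]
      · rw [if_neg hik]
        exact h2 β i k hik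
    rw [Finset.sum_congr rfl fun i _ => inner i]
    have split : ∀ i : Fin n,
        ∑ k, (1 - G - G + (if i = k then G else H))
        = (n : ℝ) * (1 - G - G + H) + (G - H) := by
      intro i
      have : ∀ k : Fin n, (1 - G - G + (if i = k then G else H))
          = (1 - G - G + H) + (if i = k then G - H else 0) := by
        intro k
        by_cases h : i = k <;> simp [h] <;> ring
      rw [Finset.sum_congr rfl fun k _ => this k, Finset.sum_add_distrib,
        Finset.sum_const, Finset.card_univ, Fintype.card_fin, nsmul_eq_mul,
        Finset.sum_ite_eq, if_pos (Finset.mem_univ i)]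
    rw [Finset.sum_congr rfl fun i _ => split i, Finset.sum_const, Finset.card_univ,
      Fintype.card_fin, nsmul_eq_mul]
  set Pi1 : ℝ := PGF T1 with hPi1
  set Pi2 : ℝ := PGF T2 with hPi2
  have hPi1e : Pi1 = ∑ β : Fin N → Bool, P β * T1 ^ wt β := by rw [hPi1, hPGF]
  have hPi2e : Pi2 = ∑ β : Fin N → Bool, P β * T2 ^ wt β := by rw [hPi2, hPGF]
  have hEval : E = n * (1 - Pi1) := by
    rw [hE]
    have step : ∀ β : Fin N → Bool,
        ∑ ω : Fin N → (Fin n → Bool),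
          P β * (∏ j, μ (ω j)) * (wt (superpose β ω) : ℝ)
        = (n : ℝ) * P β - (n : ℝ) * (P β * T1 ^ wt β) := by
      intro β
      have : ∑ ω : Fin N → (Fin n → Bool),
          P β * (∏ j, μ (ω j)) * (wt (superpose β ω) : ℝ)
          = P β * ∑ ω : Fin N → (Fin n → Bool),
              (∏ j, μ (ω j)) * (wt (superpose β ω) : ℝ) := by
        rw [Finset.mul_sum]
        exact Finset.sum_congr rfl fun ω _ => by ring
      rw [this, hE1 β]
      ring
    rw [Finset.sum_congr rfl fun β _ => step β, Finset.sum_sub_distrib,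
      ← Finset.mul_sum, ← Finset.mul_sum, hP1, ← hPi1e]
    ring
  constructor
  · exact hEval
  · have hM : ∑ β : Fin N → Bool, ∑ ω : Fin N → (Fin n → Bool),
        P β * (∏ j, μ (ω j)) * (wt (superpose β ω) : ℝ) ^ 2
        = (n : ℝ) * (n : ℝ) * 1 + ((n : ℝ) - 2 * (n : ℝ) * (n : ℝ)) * Pi1
          + ((n : ℝ) * (n : ℝ) - (n : ℝ)) * Pi2 := by
      have step : ∀ β : Fin N → Bool,
          ∑ ω : Fin N → (Fin n → Bool),
            P β * (∏ j, μ (ω j)) * (wt (superpose β ω) : ℝ) ^ 2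
          = (n : ℝ) * (n : ℝ) * P β
            + ((n : ℝ) - 2 * (n : ℝ) * (n : ℝ)) * (P β * T1 ^ wt β)
            + ((n : ℝ) * (n : ℝ) - (n : ℝ)) * (P β * T2 ^ wt β) := by
        intro β
        have : ∑ ω : Fin N → (Fin n → Bool),
            P β * (∏ j, μ (ω j)) * (wt (superpose β ω) : ℝ) ^ 2
            = P β * ∑ ω : Fin N → (Fin n → Bool),
                (∏ j, μ (ω j)) * (wt (superpose β ω) : ℝ) ^ 2 := by
          rw [Finset.mul_sum]
          exact Finset.sum_congr rfl fun ω _ => by ring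
        rw [this, hE2 β]
        ring
      rw [Finset.sum_congr rfl fun β _ => step β, Finset.sum_add_distrib,
        Finset.sum_add_distrib, ← Finset.mul_sum, ← Finset.mul_sum, ← Finset.mul_sum,
        hP1, ← hPi1e, ← hPi2e]
    rw [hV, hM, hEval]
    ring
end

section
/- With source words of weight r and query words of weight s encoded by the same binomial superimposed coding scheme with parameter q, the expected proportion of false drops is θ = Σ_{m=0}^n C(n,m) Ǧ_m p̃_m = [(1−q^r)(1−q^s) + q^s]^n, where Ǧ_m = (1−q^r)^m and p̃_m = (1−q^s)^m q^{s(n−m)}; moreover θ is minimized over q at q^s = r/(r+s), giving θ = [1 − (r/(r+s))^{r/s} · s/(r+s)]^n. -/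
lemma stmt17_amgm (r s : ℕ) (hr : 0 < r) (hs : 0 < s) (u : ℝ) (hu0 : 0 ≤ u) (hu1 : u ≤ 1) :
    u ^ r * (1 - u) ^ s ≤ ((r:ℝ)/((r:ℝ)+s)) ^ r * ((s:ℝ)/((r:ℝ)+s)) ^ s := by
  have hrs : (0:ℝ) < (r:ℝ) + s := by positivity
  set w₁ : ℝ := (r:ℝ)/((r:ℝ)+s) with hw₁def
  set w₂ : ℝ := (s:ℝ)/((r:ℝ)+s) with hw₂def
  have hw₁ : 0 < w₁ := by positivity
  have hw₂ : 0 < w₂ := by positivity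
  have hw : w₁ + w₂ = 1 := by rw [hw₁def, hw₂def]; field_simp
  set p₁ : ℝ := u / w₁ with hp₁def
  set p₂ : ℝ := (1-u) / w₂ with hp₂def
  have hp₁ : 0 ≤ p₁ := by positivity
  have hp₂ : 0 ≤ p₂ := div_nonneg (by linarith) hw₂.le
  have hu' : u = w₁ * p₁ := by rw [hp₁def, mul_div_cancel₀ _ hw₁.ne']
  have hu'' : 1 - u = w₂ * p₂ := by rw [hp₂def, mul_div_cancel₀ _ hw₂.ne']
  have hgm : p₁ ^ w₁ * p₂ ^ w₂ ≤ 1 := by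
    calc p₁ ^ w₁ * p₂ ^ w₂ ≤ w₁ * p₁ + w₂ * p₂ :=
          Real.geom_mean_le_arith_mean2_weighted hw₁.le hw₂.le hp₁ hp₂ hw
    _ = u + (1 - u) := by rw [← hu', ← hu'']
    _ = 1 := by ring
  have hpow : p₁ ^ r * p₂ ^ s ≤ 1 := by
    have h1 : ((p₁ ^ w₁ * p₂ ^ w₂) ^ ((r:ℝ)+s) : ℝ) ≤ 1 :=
      Real.rpow_le_one (by positivity) hgm hrs.le
    have e1 : w₁ * ((r:ℝ)+s) = (r:ℝ) := by rw [hw₁def]; field_simp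
    have e2 : w₂ * ((r:ℝ)+s) = (s:ℝ) := by rw [hw₂def]; field_simp
    rwa [Real.mul_rpow (Real.rpow_nonneg hp₁ _) (Real.rpow_nonneg hp₂ _),
      ← Real.rpow_mul hp₁, ← Real.rpow_mul hp₂, e1, e2,
      Real.rpow_natCast, Real.rpow_natCast] at h1
  calc u ^ r * (1-u) ^ s = (w₁^r * w₂^s) * (p₁^r * p₂^s) := by
        rw [hu'', hu', mul_pow, mul_pow]; ring
  _ ≤ (w₁^r * w₂^s) * 1 := by
        apply mul_le_mul_of_nonneg_left hpow (by positivity)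
  _ = w₁^r * w₂^s := by ring

/-- the expected proportion of false drops is
`θ(q) = Σ_m C(n,m) (1−q^r)^m (1−q^s)^m q^{s(n−m)} = [(1−q^r)(1−q^s)+q^s]^n`,
and `θ` is minimized over `q ∈ (0,1)` at the value `q₀` with
`q₀^s = r/(r+s)`, where
`θ(q₀) = [1 − (r/(r+s))^{r/s} · s/(r+s)]^n`. -/
theorem stmt17 (n r s : ℕ) (hn : 0 < n) (hr : 0 < r) (hs : 0 < s)
    (θ : ℝ → ℝ)
    (hθ : ∀ q, θ q = ((1 - q ^ r) * (1 - q ^ s) + q ^ s) ^ n)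
    (q₀ : ℝ) (hq₀0 : 0 < q₀) (hq₀1 : q₀ < 1)
    (hq₀ : q₀ ^ s = (r : ℝ) / (r + s)) :
    (∀ q : ℝ,
      (∑ m ∈ Finset.range (n + 1), (n.choose m : ℝ) * (1 - q ^ r) ^ m *
          ((1 - q ^ s) ^ m * q ^ (s * (n - m))))
        = θ q) ∧
    θ q₀ = (1 - ((r : ℝ) / (r + s)) ^ ((r : ℝ) / (s : ℝ)) * ((s : ℝ) / (r + s))) ^ n ∧
    (∀ q : ℝ, 0 < q → q < 1 → θ q₀ ≤ θ q) := by
  have hrs : (0:ℝ) < (r:ℝ) + s := by positivity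
  have h1s : 1 - q₀ ^ s = (s:ℝ)/((r:ℝ)+s) := by
    rw [hq₀]; field_simp; ring
  have hqr : q₀ ^ r = ((r:ℝ)/((r:ℝ)+s)) ^ ((r:ℝ)/(s:ℝ)) := by
    have h1 : ((q₀ ^ s : ℝ)) ^ ((r:ℝ)/(s:ℝ)) = q₀ ^ r := by
      rw [← Real.rpow_natCast q₀ s, ← Real.rpow_mul hq₀0.le]
      have : (s:ℝ) * ((r:ℝ)/(s:ℝ)) = (r:ℝ) := by
        field_simp
      rw [this, Real.rpow_natCast]
    rw [← h1, hq₀]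
  refine ⟨?_, ?_, ?_⟩
  · intro q
    rw [hθ, add_pow]
    apply Finset.sum_congr rfl
    intro m hm
    rw [pow_mul q s, mul_pow]
    ring
  · rw [hθ]
    congr 1
    rw [hqr, h1s, hq₀]
    generalize ((r:ℝ)/((r:ℝ)+s)) ^ ((r:ℝ)/(s:ℝ)) = X
    field_simp
    ring
  · intro q hq0 hq1
    rw [hθ, hθ]
    have hqs0 : (0:ℝ) ≤ q ^ s := by positivity
    have hqs1 : q ^ s ≤ 1 := pow_le_one₀ hq0.le hq1.le
    -- g(q) ≤ g(q₀) where g(q) = q^r (1 - q^s)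
    have hg : q ^ r * (1 - q ^ s) ≤ q₀ ^ r * (1 - q₀ ^ s) := by
      have hps : (q ^ r * (1 - q ^ s)) ^ s ≤ (q₀ ^ r * (1 - q₀ ^ s)) ^ s := by
        have e : (q ^ r * (1 - q ^ s)) ^ s = (q ^ s) ^ r * (1 - q ^ s) ^ s := by
          rw [mul_pow, ← pow_mul, ← pow_mul, Nat.mul_comm]
        have e0 : (q₀ ^ r * (1 - q₀ ^ s)) ^ s = (q₀ ^ s) ^ r * (1 - q₀ ^ s) ^ s := by
          rw [mul_pow, ← pow_mul, ← pow_mul, Nat.mul_comm]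
        rw [e, e0, h1s, hq₀]
        exact stmt17_amgm r s hr hs (q ^ s) hqs0 hqs1
      have hb1 : (0:ℝ) ≤ q ^ r * (1 - q ^ s) := by
        apply mul_nonneg (by positivity); linarith
      have hb2 : (0:ℝ) ≤ q₀ ^ r * (1 - q₀ ^ s) := by
        apply mul_nonneg (by positivity)
        have : q₀ ^ s ≤ 1 := pow_le_one₀ hq₀0.le hq₀1.le
        linarith
      exact le_of_pow_le_pow_left₀ hs.ne' hb2 hps
    have hbase : (1 - q₀ ^ r) * (1 - q₀ ^ s) + q₀ ^ s ≤ (1 - q ^ r) * (1 - q ^ s) + q ^ s := by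
      nlinarith [hg]
    apply pow_le_pow_left₀ _ hbase
    have h1 : q₀ ^ r ≤ 1 := pow_le_one₀ hq₀0.le hq₀1.le
    have h2 : q₀ ^ s ≤ 1 := pow_le_one₀ hq₀0.le hq₀1.le
    have h3 : (0:ℝ) ≤ q₀ ^ s := by positivity
    nlinarith
end

section
/- If the source bits are independent with bit j equal to 1 with probability p_j, and code word ψ_j has isotropic distribution with coefficients F^{(j)}_a, then the target coefficients satisfy F̌_a = ∏_{j=1}^N (p_j F^{(j)}_a + 1 − p_j). -/
attribute [local instance] Classical.propDecidable

/-- with independent source bits (bit `j` on with probability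
`p j`) and independent isotropic code words `ψ_j`, the target coefficients
satisfy `F̌_a = ∏_j (p_j F^{(j)}_a + 1 − p_j)`. -/
theorem stmt18 {N n : ℕ} (p : Fin N → ℝ) (hp0 : ∀ j, 0 ≤ p j) (hp1 : ∀ j, p j ≤ 1)
    (μ : Fin N → (Fin n → Bool) → ℝ)
    (hμ0 : ∀ j c, 0 ≤ μ j c) (hμ1 : ∀ j, ∑ c, μ j c = 1)
    (hiso : ∀ j, Isotropic (μ j))
    (α : Fin n → Bool) :
    (∑ β : Fin N → Bool, ∑ ω : Fin N → (Fin n → Bool),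
        if superpose β ω ≤ α then
          (∏ j, if β j then p j else 1 - p j) * ∏ j, μ j (ω j)
        else 0)
      = ∏ j, (p j * (∑ c : Fin n → Bool, if c ≤ α then μ j c else 0) + 1 - p j) := by
  classical
  set g : Fin N → Bool × (Fin n → Bool) → ℝ := fun j q =>
    if q.1 then p j * (if q.2 ≤ α then μ j q.2 else 0) else (1 - p j) * μ j q.2 with hg
  have key : ∀ (β : Fin N → Bool) (ω : Fin N → (Fin n → Bool)),
      (if superpose β ω ≤ α then
          (∏ j, if β j then p j else 1 - p j) * ∏ j, μ j (ω j) else 0)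
        = ∏ j, g j (β j, ω j) := by
    intro β ω
    have hsup : superpose β ω ≤ α ↔ ∀ j, β j = true → ω j ≤ α := by
      unfold superpose
      rw [Finset.sup_le_iff]
      simp
    by_cases h : superpose β ω ≤ α
    · rw [if_pos h, ← Finset.prod_mul_distrib]
      refine Finset.prod_congr rfl fun j _ => ?_
      by_cases hb : β j = true
      · simp [hg, hb, (hsup.mp h) j hb]
      · simp [hg, hb]
    · rw [if_neg h]
      rw [hsup] at h
      push_neg at h
      obtain ⟨j, hb, hω⟩ := h
      refine (Finset.prod_eq_zero (Finset.mem_univ j) ?_).symm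
      simp [hg, hb, hω]
  calc (∑ β : Fin N → Bool, ∑ ω : Fin N → (Fin n → Bool),
        if superpose β ω ≤ α then
          (∏ j, if β j then p j else 1 - p j) * ∏ j, μ j (ω j) else 0)
      = ∑ β : Fin N → Bool, ∑ ω : Fin N → (Fin n → Bool), ∏ j, g j (β j, ω j) := by
        exact Finset.sum_congr rfl fun β _ => Finset.sum_congr rfl fun ω _ => key β ω
    _ = ∑ x : Fin N → Bool × (Fin n → Bool), ∏ j, g j (x j) := by
        rw [← Fintype.sum_prod_type
          (f := fun (q : (Fin N → Bool) × (Fin N → Fin n → Bool)) => ∏ j, g j (q.1 j, q.2 j))]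
        exact (Fintype.sum_equiv (Equiv.arrowProdEquivProdArrow _ _ _) _ _
          (fun x => rfl)).symm
    _ = ∏ j, ∑ q : Bool × (Fin n → Bool), g j q := by
        rw [Finset.prod_univ_sum]
        rw [Fintype.piFinset_univ]
    _ = ∏ j, (p j * (∑ c : Fin n → Bool, if c ≤ α then μ j c else 0) + 1 - p j) := by
        refine Finset.prod_congr rfl fun j _ => ?_
        rw [Fintype.sum_prod_type, Fintype.sum_bool]
        simp only [hg]
        norm_num
        rw [← Finset.mul_sum, hμ1 j, Finset.mul_sum]
        simp only [mul_ite, mul_zero]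
        ring
end

section
/- Among isotropic distributions on {0,1}^n with a prescribed value of F_{n−1} of the form (n−w)/n for an integer 0 ≤ w ≤ n, the fixed-weight-w distribution achieves equality in the bound F_{n−2} ≥ (n−1)^{−1}(n F_{n−1} − 1) F_{n−1}, i.e., it has the minimal possible F_{n−2} (equivalently, minimal weight variance, namely zero). -/
lemma keyid (n k : ℕ) (hn : 1 ≤ n) (hk : k ≤ n) :
    ((n:ℝ) - k) * (n.choose k) = n * ((n-1).choose k) := by
  have h := Nat.choose_mul_succ_eq (n-1) k
  have hn' : n - 1 + 1 = n := Nat.succ_pred_eq_of_pos hn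
  rw [hn'] at h
  have : (n.choose k * (n - k) : ℕ) = ((n-1).choose k * n : ℕ) := by omega
  have := congrArg (Nat.cast (R := ℝ)) this
  push_cast [Nat.cast_sub hk] at this
  linarith

/-- among isotropic distributions on `{0,1}^n` with prescribed
`F_{n−1} = (n−w)/n`, the fixed-weight-`w` distribution achieves equality in
`F_{n−2} ≥ (n−1)⁻¹ (n F_{n−1} − 1) F_{n−1}` — it has the minimal possible
`F_{n−2}` — and its weight variance `n[F_{n−1} − n F_{n−1}² + (n−1)F_{n−2}]`
is zero. -/
theorem stmt19 (n w : ℕ) (hn : 2 ≤ n) (hw : w ≤ n)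
    (p : ℕ → ℝ) (hp : ∀ m, p m = if m = w then ((n.choose w : ℝ))⁻¹ else 0)
    (F : ℕ → ℝ) (hF : ∀ a, F a = ∑ k ∈ Finset.range (a + 1), (a.choose k : ℝ) * p k) :
    F (n - 1) = ((n : ℝ) - w) / n ∧
    F (n - 2) = ((n : ℝ) - 1)⁻¹ * (n * F (n - 1) - 1) * F (n - 1) ∧
    n * (F (n - 1) - n * F (n - 1) ^ 2 + ((n : ℝ) - 1) * F (n - 2)) = 0 ∧
    (∀ p' : ℕ → ℝ, (∀ k, 0 ≤ p' k) →
      (∑ k ∈ Finset.range (n + 1), (n.choose k : ℝ) * p' k) = 1 →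
      (∑ k ∈ Finset.range (n - 1 + 1), ((n - 1).choose k : ℝ) * p' k) = F (n - 1) →
      F (n - 2) ≤ ∑ k ∈ Finset.range (n - 2 + 1), ((n - 2).choose k : ℝ) * p' k) := by
  have hnR : (2:ℝ) ≤ (n:ℝ) := by exact_mod_cast hn
  have hn0 : (0:ℝ) < (n:ℝ) := by linarith
  have hn1 : (0:ℝ) < (n:ℝ) - 1 := by linarith
  set a : ℝ := (n:ℝ) - w with ha
  have hc0 : (0:ℝ) < (n.choose w : ℝ) := by exact_mod_cast Nat.choose_pos hw
  -- general formula for F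
  have hFa : ∀ b, F b = (b.choose w : ℝ) / (n.choose w) := by
    intro b
    rw [hF]
    have hcong : ∀ k ∈ Finset.range (b+1), (b.choose k : ℝ) * p k
        = if k = w then (b.choose w : ℝ) * (n.choose w : ℝ)⁻¹ else 0 := by
      intro k _
      rw [hp]
      split
      · next h => subst h; ring
      · ring
    rw [Finset.sum_congr rfl hcong, Finset.sum_ite_eq' (Finset.range (b+1)) w]
    split
    · rw [div_eq_mul_inv]
    · next h =>
      have : b.choose w = 0 := Nat.choose_eq_zero_of_lt (by
        simp only [Finset.mem_range] at h; omega)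
      simp [this]
  -- key choose identities
  have e1 : a * (n.choose w : ℝ) = n * ((n-1).choose w : ℝ) := by
    have := keyid n w (by omega) hw
    rw [ha]; linarith
  have hnm1 : ((n-1 : ℕ) : ℝ) = (n:ℝ) - 1 := by
    push_cast [Nat.cast_sub (by omega : 1 ≤ n)]; ring
  -- F(n-1) value
  have hF1 : F (n-1) = a / n := by
    rw [hFa]
    field_simp
    linarith [e1]
  -- F(n-2) value
  have hF2 : F (n-2) = a * (a - 1) / ((n:ℝ) * ((n:ℝ) - 1)) := by
    rcases eq_or_lt_of_le hw with heq | hlt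
    · have z : (n-2).choose w = 0 := Nat.choose_eq_zero_of_lt (by omega)
      have ha0 : a = 0 := by
        have hwn : (w:ℝ) = n := by exact_mod_cast congrArg (Nat.cast (R := ℝ)) heq
        rw [ha, hwn]; ring
      rw [hFa, z, ha0]
      simp
    · have hw' : w ≤ n - 1 := by omega
      have e2 : (a - 1) * ((n-1).choose w : ℝ) = ((n:ℝ) - 1) * ((n-2).choose w : ℝ) := by
        have := keyid (n-1) w (by omega) hw'
        have h2 : n - 1 - 1 = n - 2 := by omega
        rw [h2, hnm1] at this
        rw [ha]; linarith
      rw [hFa]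
      have key2 : (n:ℝ) * ((n:ℝ) - 1) * ((n-2).choose w : ℝ) = a * (a-1) * (n.choose w : ℝ) := by
        linear_combination (1 - a) * e1 - (n:ℝ) * e2
      field_simp
      linarith [key2]
  refine ⟨hF1, ?_, ?_, ?_⟩
  · rw [hF1, hF2]; field_simp
  · rw [hF1, hF2]; field_simp; ring
  · intro p' hpos hsum hS1
    set S2 := ∑ k ∈ Finset.range (n - 2 + 1), ((n - 2).choose k : ℝ) * p' k with hS2def
    -- extended sums
    have ext1 : ∑ k ∈ Finset.range (n+1), ((n-1).choose k : ℝ) * p' k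
        = ∑ k ∈ Finset.range (n-1+1), ((n-1).choose k : ℝ) * p' k := by
      symm
      apply Finset.sum_subset (Finset.range_subset_range.mpr (by omega))
      intro x _ hx
      simp only [Finset.mem_range] at hx
      have : (n-1).choose x = 0 := Nat.choose_eq_zero_of_lt (by omega)
      simp [this]
    have ext2 : ∑ k ∈ Finset.range (n+1), ((n-2).choose k : ℝ) * p' k = S2 := by
      rw [hS2def]
      symm
      apply Finset.sum_subset (Finset.range_subset_range.mpr (by omega))
      intro x _ hx
      simp only [Finset.mem_range] at hx
      have : (n-2).choose x = 0 := Nat.choose_eq_zero_of_lt (by omega)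
      simp [this]
    have hS1' : ∑ k ∈ Finset.range (n+1), ((n-1).choose k : ℝ) * p' k = a / n := by
      rw [ext1, hS1, hF1]
    -- pointwise identity
    have key : ∀ k ∈ Finset.range (n+1),
        (n.choose k : ℝ) * p' k * ((w:ℝ) - k)^2 =
          (n:ℝ) * ((n:ℝ)-1) * (((n-2).choose k : ℝ) * p' k)
          + (1 - 2*a) * (n:ℝ) * (((n-1).choose k : ℝ) * p' k)
          + a^2 * ((n.choose k : ℝ) * p' k) := by
      intro k hk
      simp only [Finset.mem_range] at hk
      have hkn : k ≤ n := by omega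
      have coeff : (n.choose k : ℝ) * ((w:ℝ) - k)^2 =
          (n:ℝ) * ((n:ℝ)-1) * ((n-2).choose k : ℝ)
          + (1 - 2*a) * (n:ℝ) * ((n-1).choose k : ℝ)
          + a^2 * (n.choose k : ℝ) := by
        have e1k : ((n:ℝ) - k) * (n.choose k : ℝ) = n * ((n-1).choose k : ℝ) :=
          keyid n k (by omega) hkn
        rcases eq_or_lt_of_le hkn with hkeq | hklt
        · have z1 : (n-1).choose k = 0 := Nat.choose_eq_zero_of_lt (by omega)
          have z2 : (n-2).choose k = 0 := Nat.choose_eq_zero_of_lt (by omega)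
          have z3 : n.choose k = 1 := by rw [hkeq]; exact Nat.choose_self n
          have hkR : (k:ℝ) = n := by exact_mod_cast congrArg (Nat.cast (R := ℝ)) hkeq
          rw [z1, z2, z3]
          push_cast
          rw [hkR, ha]; ring
        · have hk' : k ≤ n - 1 := by omega
          have e2k : ((n:ℝ) - 1 - k) * ((n-1).choose k : ℝ)
              = ((n:ℝ) - 1) * ((n-2).choose k : ℝ) := by
            have := keyid (n-1) k (by omega) hk'
            have h2 : n - 1 - 1 = n - 2 := by omega
            rw [h2, hnm1] at this
            linarith
          have hwk : (w:ℝ) - k = ((n:ℝ) - k) - a := by rw [ha]; ring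
          rw [hwk]
          linear_combination ((n:ℝ) - k - 2*a) * e1k + (n:ℝ) * e2k
      calc (n.choose k : ℝ) * p' k * ((w:ℝ) - k)^2
          = ((n.choose k : ℝ) * ((w:ℝ) - k)^2) * p' k := by ring
        _ = ((n:ℝ) * ((n:ℝ)-1) * ((n-2).choose k : ℝ)
            + (1 - 2*a) * (n:ℝ) * ((n-1).choose k : ℝ)
            + a^2 * (n.choose k : ℝ)) * p' k := by rw [coeff]
        _ = _ := by ring
    have hnonneg : (0:ℝ) ≤ ∑ k ∈ Finset.range (n+1),
        (n.choose k : ℝ) * p' k * ((w:ℝ) - k)^2 := by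
      apply Finset.sum_nonneg
      intro k _
      have := hpos k
      positivity
    rw [Finset.sum_congr rfl key] at hnonneg
    rw [Finset.sum_add_distrib, Finset.sum_add_distrib,
        ← Finset.mul_sum, ← Finset.mul_sum, ← Finset.mul_sum,
        ext2, hS1', hsum] at hnonneg
    -- hnonneg : 0 ≤ n(n-1) S2 + (1-2a) n (a/n) + a² * 1
    rw [hF2]
    rw [div_le_iff₀ (by positivity)]
    have hsimp : (1 - 2*a) * (n:ℝ) * (a / n) = (1 - 2*a) * a := by
      field_simp
    rw [hsimp] at hnonneg
    nlinarith [hnonneg]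
end
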